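/- Let a, c > 0 and b, d < 0 with x_A := −b/a < x_B := −d/c, and let (Wₙ) be defined by W₀ = 1, W₁(z) = z, Wₙ(z) = (az+b)Wₙ₋₁(z) + (cz+d)Wₙ₋₂(z). Then for every n ≥ 0 the polynomial Wₙ has n distinct real roots, all lying in a common open interval (u, v) independent of n with u < 0 < v, and the roots of Wₙ₊₁ strictly interlace the roots of Wₙ. -/

import Mathlib

open Polynomial

namespace S19


lemma exists_root_Ioo (p : Polynomial ℝ) {x y : ℝ} (hxy : x < y)
    (h : eval x p * eval y p < 0) : ∃ z ∈ Set.Ioo x y, eval z p = 0 := by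
  have hcont : ContinuousOn (fun z => eval z p) (Set.Icc x y) :=
    (p.continuous).continuousOn
  rcases lt_or_ge (eval x p) 0 with hx | hx
  · have hy : 0 < eval y p := by nlinarith
    have h0 : (0 : ℝ) ∈ Set.Ioo (eval x p) (eval y p) := ⟨hx, hy⟩
    obtain ⟨z, hz, hz0⟩ := intermediate_value_Ioo hxy.le hcont h0
    exact ⟨z, hz, hz0⟩
  · have hy : eval y p < 0 := by nlinarith
    have hx' : 0 < eval x p := by nlinarith
    have h0 : (0 : ℝ) ∈ Set.Ioo (eval y p) (eval x p) := ⟨hy, hx'⟩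
    obtain ⟨z, hz, hz0⟩ := intermediate_value_Ioo' hxy.le hcont h0
    exact ⟨z, hz, hz0⟩

lemma sign_eq_of_no_root (p : Polynomial ℝ) {x y : ℝ} (hxy : x ≤ y)
    (h : ∀ z, x ≤ z → z ≤ y → eval z p ≠ 0) : 0 < eval x p * eval y p := by
  rcases eq_or_lt_of_le hxy with rfl | hlt
  · exact mul_self_pos.mpr (h x le_rfl le_rfl)
  · by_contra hcon
    push_neg at hcon
    rcases eq_or_lt_of_le hcon with heq | hltm
    · rcases mul_eq_zero.mp heq with h1 | h1
      · exact h x le_rfl hxy h1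
      · exact h y hxy le_rfl h1
    · obtain ⟨z, hz, hz0⟩ := exists_root_Ioo p hlt hltm
      exact h z hz.1.le hz.2.le hz0



lemma exists_u (a b c d : ℝ) (ha : 0 < a) (hc : 0 < c) (hb : b < 0) (hd : d < 0)
    (W : ℕ → Polynomial ℝ) (h0 : W 0 = 1) (h1 : W 1 = X)
    (hrec : ∀ n, W (n + 2) = (C a * X + C b) * W (n + 1) + (C c * X + C d) * W n) :
    ∃ u : ℝ, u < 0 ∧ ∀ n, 0 < (-1 : ℝ) ^ n * eval u (W n) := by
  set M : ℝ := (c + 1) + (-d) + 1 / c + (4 * c + 4) / a ^ 2 + 1 with hMdef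
  have hc1 : 0 < c + 1 := by linarith
  have hd1 : 0 < -d := by linarith
  have hic : 0 < 1 / c := by positivity
  have hia : 0 < (4 * c + 4) / a ^ 2 := by positivity
  have hM1 : 1 ≤ M := by simp only [hMdef]; linarith
  have hMc : c + 1 ≤ M := by simp only [hMdef]; linarith
  have hMd : -d ≤ M := by simp only [hMdef]; linarith
  have hMic : 1 / c ≤ M := by simp only [hMdef]; linarith
  have hMia : (4 * c + 4) / a ^ 2 ≤ M := by simp only [hMdef]; linarith
  have hM0 : 0 < M := by linarith
  have hcMd : 0 < c * M - d := by nlinarith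
  set t : ℝ := Real.sqrt (c * M - d) with htdef
  have ht0 : 0 ≤ t := Real.sqrt_nonneg _
  have ht2 : t ^ 2 = c * M - d := Real.sq_sqrt hcMd.le
  have ht1 : 1 ≤ t := by
    have hcM : 1 ≤ c * M := by
      rw [div_le_iff₀ hc] at hMic; linarith [hMic]
    nlinarith
  have htM : t ≤ M := by nlinarith
  have htA : 2 * t ≤ a * M - b := by
    have h4 : 4 * (c * M - d) ≤ a ^ 2 * M ^ 2 := by
      have : 4 * c + 4 ≤ a ^ 2 * M := by
        rw [div_le_iff₀ (by positivity : (0:ℝ) < a ^ 2)] at hMia; linarith [hMia]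
      nlinarith
    have h2t : 2 * t ≤ a * M := by
      by_contra hcon
      push_neg at hcon
      have hg1 : 0 < 2 * t - a * M := by linarith
      have hg2 : 0 < 2 * t + a * M := by nlinarith
      nlinarith [mul_pos hg1 hg2]
    linarith
  refine ⟨-M, by linarith, ?_⟩
  set P : ℕ → ℝ := fun n => (-1) ^ n * eval (-M) (W n) with hPdef
  have hP0 : P 0 = 1 := by simp [hPdef, h0]
  have hP1 : P 1 = M := by simp [hPdef, h1]
  have hrecP : ∀ n, P (n + 2) = (a * M - b) * P (n + 1) - (c * M - d) * P n := by
    intro n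
    simp only [hPdef, hrec n]
    simp only [eval_add, eval_mul, eval_C, eval_X]
    ring
  have key : ∀ n, 0 < P (n + 1) ∧ t * P (n + 1) ≤ P (n + 2) := by
    intro n
    induction n with
    | zero =>
      refine ⟨by rw [hP1]; exact hM0, ?_⟩
      rw [hrecP 0, hP0, hP1]
      have e1 : 2 * t * M ≤ (a * M - b) * M := mul_le_mul_of_nonneg_right htA hM0.le
      have e2 : t * t ≤ t * M := mul_le_mul_of_nonneg_left htM ht0
      have e3 : c * M - d = t * t := by rw [← ht2]; ring
      linarith
    | succ n ih =>
      obtain ⟨hp1, hp2⟩ := ih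
      have hp3 : 0 < P (n + 2) := lt_of_lt_of_le (by positivity) hp2
      refine ⟨hp3, ?_⟩
      rw [hrecP (n + 1)]
      -- (aM-b) P(n+2) - (cM-d) P(n+1) ≥ 2t P(n+2) - t * (t * P(n+1)) ≥ 2t P(n+2) - t P(n+2) = t P(n+2)
      have h5 : t * (t * P (n + 1)) ≤ t * P (n + 2) :=
        mul_le_mul_of_nonneg_left hp2 ht0
      have hA2 : 2 * t * P (n + 2) ≤ (a * M - b) * P (n + 2) :=
        mul_le_mul_of_nonneg_right htA hp3.le
      have h6 : (c * M - d) * P (n + 1) = t * (t * P (n + 1)) := by rw [← ht2]; ring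
      linarith
  intro n
  cases n with
  | zero => simp [h0]
  | succ m => exact (key m).1



structure Ctx where
  a : ℝ
  b : ℝ
  c : ℝ
  d : ℝ
  u : ℝ
  W : ℕ → Polynomial ℝ
  ha : 0 < a
  hc : 0 < c
  hb : b < 0
  hd : d < 0
  hAB : -b / a < -d / c
  h0 : W 0 = 1
  h1 : W 1 = X
  hrec : ∀ n, W (n + 2) = (C a * X + C b) * W (n + 1) + (C c * X + C d) * W n
  hu0 : u < 0
  hPu : ∀ n, 0 < (-1 : ℝ) ^ n * eval u (W n)

namespace Ctx

variable (Γ : Ctx)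

noncomputable def v : ℝ := -Γ.d / Γ.c

lemma v_pos : 0 < Γ.v := by
  have hc := Γ.hc; have hd := Γ.hd
  unfold v
  apply div_pos (by linarith) hc

lemma Bv : Γ.c * Γ.v + Γ.d = 0 := by
  have hc := Γ.hc
  rw [v, mul_div_assoc', mul_div_cancel_left₀ _ hc.ne']
  ring

lemma eval_rec (n : ℕ) (z : ℝ) :
    eval z (Γ.W (n + 2)) =
      (Γ.a * z + Γ.b) * eval z (Γ.W (n + 1)) + (Γ.c * z + Γ.d) * eval z (Γ.W n) := by
  rw [Γ.hrec n]; simp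

lemma pos_ge : ∀ n, ∀ x, Γ.v ≤ x → 0 < eval x (Γ.W n) := by
  have key : ∀ n, ∀ x, Γ.v ≤ x → 0 < eval x (Γ.W n) ∧ 0 < eval x (Γ.W (n + 1)) := by
    intro n
    induction n with
    | zero =>
      intro x hx
      have h := Γ.v_pos
      constructor
      · simp [Γ.h0]
      · simp [Γ.h1]; linarith
    | succ n ih =>
      intro x hx
      obtain ⟨hn, hn1⟩ := ih x hx
      refine ⟨hn1, ?_⟩
      rw [Γ.eval_rec]
      have ha := Γ.ha; have hc := Γ.hc
      have hA : 0 < Γ.a * x + Γ.b := by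
        have h1 : -Γ.b / Γ.a < x := lt_of_lt_of_le Γ.hAB hx
        rw [div_lt_iff₀ ha] at h1
        linarith
      have hB : 0 ≤ Γ.c * x + Γ.d := by
        have h1 : -Γ.d / Γ.c ≤ x := hx
        rw [div_le_iff₀ hc] at h1
        linarith
      nlinarith
  intro n x hx; exact (key n x hx).1

lemma ne_zero (n : ℕ) : Γ.W n ≠ 0 := by
  intro h
  have := Γ.pos_ge n Γ.v le_rfl
  simp [h] at this

lemma natDegree_le : ∀ n, (Γ.W n).natDegree ≤ n := by
  have key : ∀ n, (Γ.W n).natDegree ≤ n ∧ (Γ.W (n + 1)).natDegree ≤ n + 1 := by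
    intro n
    induction n with
    | zero =>
      constructor
      · simp [Γ.h0]
      · simp [Γ.h1]
    | succ n ih =>
      refine ⟨ih.2, ?_⟩
      rw [Γ.hrec n]
      refine le_trans (natDegree_add_le _ _) ?_
      have l1 : (C Γ.a * X + C Γ.b).natDegree ≤ 1 := natDegree_linear_le
      have l2 : (C Γ.c * X + C Γ.d).natDegree ≤ 1 := natDegree_linear_le
      have m1 := natDegree_mul_le (p := C Γ.a * X + C Γ.b) (q := Γ.W (n + 1))
      have m2 := natDegree_mul_le (p := C Γ.c * X + C Γ.d) (q := Γ.W n)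
      have := ih.1; have := ih.2
      omega
  intro n; exact (key n).1


lemma u_lt_v : Γ.u < Γ.v := lt_trans Γ.hu0 Γ.v_pos

lemma B_neg (x : ℝ) (hx : x < Γ.v) : Γ.c * x + Γ.d < 0 := by
  have h := Γ.Bv
  have hc := Γ.hc
  nlinarith

end Ctx

structure Good (Γ : Ctx) (n : ℕ) (rn : Fin n → ℝ) (rn1 : Fin (n + 1) → ℝ) : Prop where
  mono : StrictMono rn
  mono1 : StrictMono rn1
  mem : ∀ i, Γ.u < rn i ∧ rn i < Γ.v
  mem1 : ∀ i, Γ.u < rn1 i ∧ rn1 i < Γ.v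
  rts : ∀ x, eval x (Γ.W n) = 0 ↔ ∃ i, rn i = x
  rts1 : ∀ x, eval x (Γ.W (n + 1)) = 0 ↔ ∃ i, rn1 i = x
  inter : ∀ i : Fin n, rn1 i.castSucc < rn i ∧ rn i < rn1 i.succ
  signA : ∀ i : Fin (n + 1), 0 < (-1 : ℝ) ^ (n + (i : ℕ)) * eval (rn1 i) (Γ.W n)
  signB : ∀ i : Fin n, 0 < (-1 : ℝ) ^ (n + (i : ℕ)) * eval (rn i) (Γ.W (n + 1))

lemma base (Γ : Ctx) : Good Γ 0 (fun i => i.elim0) (fun _ => 0) := by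
  constructor
  · intro i; exact i.elim0
  · intro i j hij
    exact absurd hij (by omega)
  · intro i; exact i.elim0
  · intro i; exact ⟨Γ.hu0, Γ.v_pos⟩
  · intro x
    simp only [Γ.h0, eval_one]
    constructor
    · intro h; norm_num at h
    · rintro ⟨i, -⟩; exact i.elim0
  · intro x; simp [Γ.h1, eq_comm]
  · intro i; exact i.elim0
  · intro i
    simp [Γ.h0]
  · intro i; exact i.elim0

namespace Ctx
variable (Γ : Ctx)



end Ctx

lemma sign_transfer {s x y : ℝ} (h1 : 0 < s * x) (h2 : 0 < x * y) : 0 < s * y := by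
  rcases lt_trichotomy x 0 with hx | hx | hx
  · have hs : s < 0 := by nlinarith
    have hy : y < 0 := by nlinarith
    nlinarith
  · rw [hx, mul_zero] at h1; linarith
  · have hs : 0 < s := by nlinarith
    have hy : 0 < y := by nlinarith
    nlinarith

namespace Ctx

variable (Γ : Ctx)

lemma step {n : ℕ} {rn : Fin n → ℝ} {rn1 : Fin (n + 1) → ℝ} (G : Good Γ n rn rn1) :
    ∃ rn2 : Fin (n + 2) → ℝ, Good Γ (n + 1) rn1 rn2 := by
  classical
  set e : Fin (n + 3) → ℝ := fun j =>
    if h1 : (j : ℕ) = 0 then Γ.u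
    else if h2 : (j : ℕ) = n + 2 then Γ.v
    else rn1 ⟨(j : ℕ) - 1, by have := j.isLt; omega⟩ with hedef
  have e_zero : ∀ j : Fin (n + 3), (j : ℕ) = 0 → e j = Γ.u := by
    intro j hj; simp only [hedef]; rw [dif_pos hj]
  have e_last : ∀ j : Fin (n + 3), (j : ℕ) = n + 2 → e j = Γ.v := by
    intro j hj
    simp only [hedef]
    rw [dif_neg (by omega), dif_pos hj]
  have e_mid : ∀ (j : Fin (n + 3)) (i : Fin (n + 1)), (j : ℕ) = (i : ℕ) + 1 → e j = rn1 i := by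
    intro j i hj
    have hi := i.isLt
    simp only [hedef]
    rw [dif_neg (by omega), dif_neg (by omega)]
    congr 1
    exact Fin.ext (by simp only [hj]; omega)
  have e_mono : StrictMono e := by
    intro p q hpq
    have hq3 := q.isLt
    have hpq' : (p : ℕ) < (q : ℕ) := hpq
    by_cases hp0 : (p : ℕ) = 0
    · rw [e_zero p hp0]
      by_cases hql : (q : ℕ) = n + 2
      · rw [e_last q hql]; exact Γ.u_lt_v
      · rw [e_mid q ⟨(q : ℕ) - 1, by omega⟩ (show (q : ℕ) = (q : ℕ) - 1 + 1 by omega)]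
        exact (G.mem1 _).1
    · rw [e_mid p ⟨(p : ℕ) - 1, by omega⟩ (show (p : ℕ) = (p : ℕ) - 1 + 1 by omega)]
      by_cases hql : (q : ℕ) = n + 2
      · rw [e_last q hql]; exact (G.mem1 _).2
      · rw [e_mid q ⟨(q : ℕ) - 1, by omega⟩ (show (q : ℕ) = (q : ℕ) - 1 + 1 by omega)]
        exact G.mono1 (Fin.mk_lt_mk.mpr (by omega))
  have e_mono' := e_mono.monotone
  have sg : ∀ j : Fin (n + 3), 0 < (-1 : ℝ) ^ (n + (j : ℕ)) * eval (e j) (Γ.W (n + 2)) := by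
    intro j
    by_cases hj0 : (j : ℕ) = 0
    · rw [e_zero j hj0, hj0]
      have h := Γ.hPu (n + 2)
      have hpow : (-1 : ℝ) ^ (n + 2) = (-1 : ℝ) ^ (n + 0) := by
        rw [pow_add, pow_add]; norm_num
      rw [hpow] at h; exact h
    · by_cases hjl : (j : ℕ) = n + 2
      · rw [e_last j hjl, hjl]
        have hp := Γ.pos_ge (n + 2) Γ.v le_rfl
        have hpow : (-1 : ℝ) ^ (n + (n + 2)) = 1 := Even.neg_one_pow ⟨n + 1, by ring⟩
        rw [hpow]; linarith
      · have hj3 := j.isLt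
        have hilt : (j : ℕ) - 1 < n + 1 := by omega
        have hje : e j = rn1 ⟨(j : ℕ) - 1, hilt⟩ :=
          e_mid j _ (show (j : ℕ) = (j : ℕ) - 1 + 1 by omega)
        have hroot : eval (rn1 ⟨(j : ℕ) - 1, hilt⟩) (Γ.W (n + 1)) = 0 :=
          (G.rts1 _).mpr ⟨_, rfl⟩
        have hBneg : Γ.c * rn1 ⟨(j : ℕ) - 1, hilt⟩ + Γ.d < 0 := Γ.B_neg _ (G.mem1 _).2
        have hrec2 : eval (rn1 ⟨(j : ℕ) - 1, hilt⟩) (Γ.W (n + 2)) =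
            (Γ.c * rn1 ⟨(j : ℕ) - 1, hilt⟩ + Γ.d) * eval (rn1 ⟨(j : ℕ) - 1, hilt⟩) (Γ.W n) := by
          rw [Γ.eval_rec, hroot]; ring
        have hsA := G.signA ⟨(j : ℕ) - 1, hilt⟩
        have hiv : n + (j : ℕ) = (n + ((j : ℕ) - 1)) + 1 := by omega
        rw [hje, hrec2, hiv, pow_succ]
        have hr : (-1 : ℝ) ^ (n + ((j : ℕ) - 1)) * (-1) *
            ((Γ.c * rn1 ⟨(j : ℕ) - 1, hilt⟩ + Γ.d) * eval (rn1 ⟨(j : ℕ) - 1, hilt⟩) (Γ.W n)) =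
            (-(Γ.c * rn1 ⟨(j : ℕ) - 1, hilt⟩ + Γ.d)) *
              ((-1 : ℝ) ^ (n + ((j : ℕ) - 1)) * eval (rn1 ⟨(j : ℕ) - 1, hilt⟩) (Γ.W n)) := by
          ring
        rw [hr]
        exact mul_pos (by linarith) hsA
  have opp : ∀ j : Fin (n + 2),
      eval (e j.castSucc) (Γ.W (n + 2)) * eval (e j.succ) (Γ.W (n + 2)) < 0 := by
    intro j
    have h1 := sg j.castSucc
    have h2 := sg j.succ
    rw [show ((j.castSucc : Fin (n + 3)) : ℕ) = (j : ℕ) from rfl] at h1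
    rw [show ((j.succ : Fin (n + 3)) : ℕ) = (j : ℕ) + 1 from rfl,
      show n + ((j : ℕ) + 1) = (n + (j : ℕ)) + 1 by omega, pow_succ] at h2
    set s := (-1 : ℝ) ^ (n + (j : ℕ)) with hs
    have hss : s * s = 1 := by
      rw [hs, ← pow_add]
      exact Even.neg_one_pow ⟨n + (j : ℕ), by ring⟩
    have hm := mul_pos h1 h2
    have hx : s * eval (e j.castSucc) (Γ.W (n + 2)) *
        (s * -1 * eval (e j.succ) (Γ.W (n + 2))) =
        -((s * s) * (eval (e j.castSucc) (Γ.W (n + 2)) * eval (e j.succ) (Γ.W (n + 2)))) := by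
      ring
    rw [hx, hss, one_mul] at hm
    linarith
  have hex : ∀ j : Fin (n + 2), ∃ z ∈ Set.Ioo (e j.castSucc) (e j.succ),
      eval z (Γ.W (n + 2)) = 0 :=
    fun j => exists_root_Ioo _ (e_mono (Fin.castSucc_lt_succ : j.castSucc < j.succ)) (opp j)
  choose σ hσmem hσroot using hex
  have σgt : ∀ j, e j.castSucc < σ j := fun j => (hσmem j).1
  have σlt : ∀ j, σ j < e j.succ := fun j => (hσmem j).2
  have σmono : StrictMono σ := by
    intro p q hpq
    have hpq' : (p : ℕ) < (q : ℕ) := hpq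
    have h3 : e p.succ ≤ e q.castSucc :=
      e_mono' (Fin.le_def.mpr (show (p : ℕ) + 1 ≤ (q : ℕ) by omega))
    linarith [σlt p, σgt q]
  have σmem : ∀ j : Fin (n + 2), Γ.u < σ j ∧ σ j < Γ.v := by
    intro j
    have hj2 := j.isLt
    have hl : e ⟨0, by omega⟩ ≤ e j.castSucc :=
      e_mono' (Fin.le_def.mpr (show (0 : ℕ) ≤ (j : ℕ) by omega))
    have hr : e j.succ ≤ e ⟨n + 2, by omega⟩ :=
      e_mono' (Fin.le_def.mpr (show (j : ℕ) + 1 ≤ n + 2 by omega))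
    rw [e_zero ⟨0, by omega⟩ rfl] at hl
    rw [e_last ⟨n + 2, by omega⟩ rfl] at hr
    exact ⟨lt_of_le_of_lt hl (σgt j), lt_of_lt_of_le (σlt j) hr⟩
  have hW2ne : Γ.W (n + 2) ≠ 0 := Γ.ne_zero _
  have hcard : ((Γ.W (n + 2)).roots.card : ℕ) ≤ n + 2 := by
    refine le_trans ?_ (Γ.natDegree_le (n + 2))
    exact_mod_cast card_roots' _
  have σinj : Function.Injective σ := σmono.injective
  have hrts2 : ∀ x, eval x (Γ.W (n + 2)) = 0 ↔ ∃ j, σ j = x := by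
    have hsub : (Finset.univ.image σ) ⊆ (Γ.W (n + 2)).roots.toFinset := by
      intro x hx
      rw [Finset.mem_image] at hx
      obtain ⟨j, -, rfl⟩ := hx
      rw [Multiset.mem_toFinset, mem_roots hW2ne]
      exact hσroot j
    have hcard2 : (Γ.W (n + 2)).roots.toFinset.card ≤ n + 2 :=
      le_trans (Multiset.toFinset_card_le _) hcard
    have himg : (Finset.univ.image σ).card = n + 2 := by
      rw [Finset.card_image_of_injective _ σinj, Finset.card_univ, Fintype.card_fin]
    have heq : Finset.univ.image σ = (Γ.W (n + 2)).roots.toFinset :=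
      Finset.eq_of_subset_of_card_le hsub (by omega)
    intro x
    constructor
    · intro hx
      have hx2 : x ∈ (Γ.W (n + 2)).roots.toFinset := by
        rw [Multiset.mem_toFinset, mem_roots hW2ne]; exact hx
      rw [← heq, Finset.mem_image] at hx2
      obtain ⟨j, -, hj⟩ := hx2
      exact ⟨j, hj⟩
    · rintro ⟨j, rfl⟩; exact hσroot j
  have hinter : ∀ i : Fin (n + 1), σ i.castSucc < rn1 i ∧ rn1 i < σ i.succ := by
    intro i
    have h1 : e (i.castSucc).succ = rn1 i := e_mid _ i rfl
    have h2 : e (i.succ).castSucc = rn1 i := e_mid _ i rfl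
    constructor
    · rw [← h1]; exact σlt i.castSucc
    · rw [← h2]; exact σgt i.succ
  have hsignB : ∀ i : Fin (n + 1),
      0 < (-1 : ℝ) ^ ((n + 1) + (i : ℕ)) * eval (rn1 i) (Γ.W (n + 2)) := by
    intro i
    have hi := i.isLt
    have hlt : (i : ℕ) + 1 < n + 3 := by omega
    have h := sg ⟨(i : ℕ) + 1, hlt⟩
    rw [e_mid _ i rfl] at h
    rw [show (n + 1) + (i : ℕ) = n + ((i : ℕ) + 1) by omega]
    exact h
  have hsignA : ∀ j : Fin (n + 2),
      0 < (-1 : ℝ) ^ ((n + 1) + (j : ℕ)) * eval (σ j) (Γ.W (n + 1)) := by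
    intro j
    have hj2 := j.isLt
    by_cases hj0 : (j : ℕ) = 0
    · have hub : Γ.u ≤ σ j := (σmem j).1.le
      have hnr : ∀ z, Γ.u ≤ z → z ≤ σ j → eval z (Γ.W (n + 1)) ≠ 0 := by
        intro z hz1 hz2 hz0
        obtain ⟨i, rfl⟩ := (G.rts1 z).mp hz0
        have h1 : e j.succ = rn1 ⟨0, by omega⟩ :=
          e_mid _ _ (show (j : ℕ) + 1 = 0 + 1 by omega)
        have h2 : rn1 ⟨0, by omega⟩ ≤ rn1 i :=
          G.mono1.monotone (Fin.le_def.mpr (Nat.zero_le _))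
        have h3 := σlt j
        rw [h1] at h3
        linarith
      have hpr := sign_eq_of_no_root _ hub hnr
      have hku := Γ.hPu (n + 1)
      have hres := sign_transfer hku hpr
      rw [hj0]
      simpa using hres
    · by_cases hjl : (j : ℕ) = n + 1
      · have hvb : σ j ≤ Γ.v := (σmem j).2.le
        have hnr : ∀ z, σ j ≤ z → z ≤ Γ.v → eval z (Γ.W (n + 1)) ≠ 0 := by
          intro z hz1 hz2 hz0
          obtain ⟨i, rfl⟩ := (G.rts1 z).mp hz0
          have hi := i.isLt
          have h1 : e j.castSucc = rn1 ⟨n, by omega⟩ :=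
            e_mid _ _ (show (j : ℕ) = n + 1 by omega)
          have h2 : rn1 i ≤ rn1 ⟨n, by omega⟩ :=
            G.mono1.monotone (Fin.le_def.mpr (show (i : ℕ) ≤ n by omega))
          have h3 := σgt j
          rw [h1] at h3
          linarith
        have hpr := sign_eq_of_no_root _ hvb hnr
        have hv := Γ.pos_ge (n + 1) Γ.v le_rfl
        have hσpos : 0 < eval (σ j) (Γ.W (n + 1)) := by nlinarith
        have hpow : (-1 : ℝ) ^ ((n + 1) + (j : ℕ)) = 1 := by
          rw [hjl]; exact Even.neg_one_pow ⟨n + 1, by ring⟩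
        rw [hpow]; linarith
      · have hi0lt : (j : ℕ) - 1 < n := by omega
        have hjm1lt : (j : ℕ) - 1 < n + 1 := by omega
        have hjlt : (j : ℕ) < n + 1 := by omega
        have hL : e j.castSucc = rn1 ⟨(j : ℕ) - 1, hjm1lt⟩ :=
          e_mid _ _ (show (j : ℕ) = (j : ℕ) - 1 + 1 by omega)
        have hR : e j.succ = rn1 ⟨(j : ℕ), hjlt⟩ :=
          e_mid _ _ rfl
        have hσ1 : rn1 ⟨(j : ℕ) - 1, hjm1lt⟩ < σ j := by rw [← hL]; exact σgt j
        have hσ2 : σ j < rn1 ⟨(j : ℕ), hjlt⟩ := by rw [← hR]; exact σlt j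
        have hiL : rn1 ⟨(j : ℕ) - 1, hjm1lt⟩ < rn ⟨(j : ℕ) - 1, hi0lt⟩ := by
          have h := (G.inter ⟨(j : ℕ) - 1, hi0lt⟩).1
          have he : (⟨(j : ℕ) - 1, hi0lt⟩ : Fin n).castSucc = ⟨(j : ℕ) - 1, hjm1lt⟩ :=
            Fin.ext rfl
          rwa [he] at h
        have hiR : rn ⟨(j : ℕ) - 1, hi0lt⟩ < rn1 ⟨(j : ℕ), hjlt⟩ := by
          have h := (G.inter ⟨(j : ℕ) - 1, hi0lt⟩).2
          have he : (⟨(j : ℕ) - 1, hi0lt⟩ : Fin n).succ = ⟨(j : ℕ), hjlt⟩ :=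
            Fin.ext (by simp only [Fin.val_succ]; omega)
          rwa [he] at h
        have hnr : ∀ z, min (σ j) (rn ⟨(j : ℕ) - 1, hi0lt⟩) ≤ z →
            z ≤ max (σ j) (rn ⟨(j : ℕ) - 1, hi0lt⟩) → eval z (Γ.W (n + 1)) ≠ 0 := by
          intro z hz1 hz2 hz0
          obtain ⟨i, rfl⟩ := (G.rts1 z).mp hz0
          rcases le_or_gt (i : ℕ) ((j : ℕ) - 1) with hle | hlt2
          · have hmono : rn1 i ≤ rn1 ⟨(j : ℕ) - 1, hjm1lt⟩ :=
              G.mono1.monotone (Fin.le_def.mpr (by simp only; omega))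
            have hm1 : rn1 i < min (σ j) (rn ⟨(j : ℕ) - 1, hi0lt⟩) := by
              apply lt_min <;> linarith
            linarith
          · have hmono : rn1 ⟨(j : ℕ), hjlt⟩ ≤ rn1 i :=
              G.mono1.monotone (Fin.le_def.mpr (by simp only; omega))
            have hm1 : max (σ j) (rn ⟨(j : ℕ) - 1, hi0lt⟩) < rn1 i := by
              apply max_lt <;> linarith
            linarith
        have hpr : 0 < eval (rn ⟨(j : ℕ) - 1, hi0lt⟩) (Γ.W (n + 1)) *
            eval (σ j) (Γ.W (n + 1)) := by
          rcases le_total (rn ⟨(j : ℕ) - 1, hi0lt⟩) (σ j) with hcase | hcase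
          · exact sign_eq_of_no_root _ hcase (fun z h1 h2 =>
              hnr z (le_trans (min_le_right _ _) h1) (le_trans h2 (le_max_left _ _)))
          · have h := sign_eq_of_no_root (Γ.W (n + 1)) hcase (fun z h1 h2 =>
              hnr z (le_trans (min_le_left _ _) h1) (le_trans h2 (le_max_right _ _)))
            nlinarith
        have hkB := G.signB ⟨(j : ℕ) - 1, hi0lt⟩
        have hres := sign_transfer hkB hpr
        have hpow : (-1 : ℝ) ^ ((n + 1) + (j : ℕ)) = (-1 : ℝ) ^ (n + ((j : ℕ) - 1)) := by
          rw [show (n + 1) + (j : ℕ) = (n + ((j : ℕ) - 1)) + 2 by omega, pow_add]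
          norm_num
        rw [hpow]
        exact hres
  exact ⟨σ, G.mono1, σmono, G.mem1, σmem, G.rts1, hrts2, hinter, hsignA, hsignB⟩

end Ctx

noncomputable def pack (Γ : Ctx) : ∀ n : ℕ,
    {p : (Fin n → ℝ) × (Fin (n + 1) → ℝ) // Good Γ n p.1 p.2}
  | 0 => ⟨(fun i => i.elim0, fun _ => 0), base Γ⟩
  | n + 1 =>
    ⟨((pack Γ n).1.2, Classical.choose (Γ.step (pack Γ n).2)),
      Classical.choose_spec (Γ.step (pack Γ n).2)⟩

lemma pack_succ_fst (Γ : Ctx) (n : ℕ) : (pack Γ (n + 1)).1.1 = (pack Γ n).1.2 := by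
  rw [pack]

end S19

open Polynomial in
theorem stmt_19 (a b c d : ℝ) (ha : 0 < a) (hc : 0 < c) (hb : b < 0) (hd : d < 0)
    (hAB : -b / a < -d / c)
    (W : ℕ → Polynomial ℝ) (h0 : W 0 = 1) (h1 : W 1 = X)
    (hrec : ∀ n, W (n + 2) = (C a * X + C b) * W (n + 1) + (C c * X + C d) * W n) :
    ∃ u v : ℝ, u < 0 ∧ 0 < v ∧
      ∃ r : (n : ℕ) → Fin n → ℝ,
        (∀ n, StrictMono (r n)) ∧
        (∀ n i, u < r n i ∧ r n i < v) ∧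
        (∀ n (x : ℝ), (W n).IsRoot x ↔ ∃ i, r n i = x) ∧
        (∀ n (i : Fin n), r (n + 1) i.castSucc < r n i ∧ r n i < r (n + 1) i.succ) := by
  obtain ⟨u, hu0, hPu⟩ := S19.exists_u a b c d ha hc hb hd W h0 h1 hrec
  set Γ : S19.Ctx := ⟨a, b, c, d, u, W, ha, hc, hb, hd, hAB, h0, h1, hrec, hu0, hPu⟩ with hΓ
  refine ⟨u, Γ.v, hu0, Γ.v_pos, fun n => (S19.pack Γ n).1.1, ?_, ?_, ?_, ?_⟩
  · intro n; exact (S19.pack Γ n).2.mono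
  · intro n i; exact (S19.pack Γ n).2.mem i
  · intro n x; exact (S19.pack Γ n).2.rts x
  · intro n i
    have hcs := S19.pack_succ_fst Γ n
    have h := (S19.pack Γ n).2.inter i
    simp only
    rw [hcs]
    exact h
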